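/- Let μ > 0 and d ≥ 0. Let X, X', I be mutually independent random variables, all exponentially distributed with rate μ. Then E[ min{(X' + I + X − d)^+, X + I} ] = (μ e^{−μd} / 2) (d + 2/μ)². -/

import Mathlib

open MeasureTheory ProbabilityTheory Real Set Filter Topology
open scoped ENNReal NNReal

namespace Cor3Aux

lemma hasDerivAt_A (mu c x : ℝ) (hmu : mu ≠ 0) :
    HasDerivAt (fun t => -(t + c + 1/mu) * exp (-(mu*t)))
      ((x + c) * (mu * exp (-(mu*x)))) x := by
  have h1 : HasDerivAt (fun t : ℝ => -(t + c + 1/mu)) (-1) x := by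
    exact (((hasDerivAt_id x).add_const c).add_const (1/mu)).neg
  have h2 : HasDerivAt (fun t : ℝ => exp (-(mu*t))) (exp (-(mu*x)) * (-mu)) x :=
    (((hasDerivAt_id x).const_mul mu).neg.exp).congr_deriv (by simp)
  have := h1.mul h2
  refine this.congr_deriv ?_
  field_simp
  ring

lemma hasDerivAt_B (mu x : ℝ) : HasDerivAt (fun t => -exp (-(mu*t))) (mu * exp (-(mu*x))) x := by
  have h2 : HasDerivAt (fun t : ℝ => exp (-(mu*t))) (exp (-(mu*x)) * (-mu)) x :=
    (((hasDerivAt_id x).const_mul mu).neg.exp).congr_deriv (by simp)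
  refine h2.neg.congr_deriv ?_; ring

lemma tendsto_exp' (mu : ℝ) (hmu : 0 < mu) :
    Tendsto (fun t : ℝ => exp (-(mu*t))) atTop (𝓝 0) := by
  have h : Tendsto (fun t : ℝ => mu * t) atTop atTop := tendsto_id.const_mul_atTop hmu
  exact Tendsto.congr (fun t => rfl) (tendsto_exp_neg_atTop_nhds_zero.comp h)

lemma tendsto_linexp (mu : ℝ) (hmu : 0 < mu) :
    Tendsto (fun t : ℝ => t * exp (-(mu*t))) atTop (𝓝 0) := by
  have := tendsto_rpow_mul_exp_neg_mul_atTop_nhds_zero 1 mu hmu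
  simpa [Real.rpow_one, neg_mul] using this

lemma tendsto_A (mu c : ℝ) (hmu : 0 < mu) :
    Tendsto (fun t => -(t + c + 1/mu) * exp (-(mu*t))) atTop (𝓝 0) := by
  have h1 := (tendsto_linexp mu hmu).neg
  have h2 := ((tendsto_exp' mu hmu).const_mul (-(c + 1/mu)))
  have := h1.add h2
  simp only [neg_zero, mul_zero, add_zero] at this
  refine this.congr (fun t => by ring)

/-- `∫_{Ioi a} (x+c) μ e^{-μx} = (a+c+1/μ) e^{-μa}` when `0 ≤ a + c`. -/
lemma integral_Ioi_linexp (mu a c : ℝ) (hmu : 0 < mu) (h : 0 ≤ a + c) :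
    ∫ x in Ioi a, (x + c) * (mu * exp (-(mu*x))) = (a + c + 1/mu) * exp (-(mu*a)) := by
  have := integral_Ioi_of_hasDerivAt_of_nonneg' (a := a)
    (g := fun t => -(t + c + 1/mu) * exp (-(mu*t)))
    (g' := fun x => (x + c) * (mu * exp (-(mu*x))))
    (fun x _ => hasDerivAt_A mu c x hmu.ne')
    (fun x hx => mul_nonneg (by nlinarith [hx.out]) (by positivity))
    (tendsto_A mu c hmu)
  rw [this]; ring

lemma integrableOn_Ioi_linexp (mu a c : ℝ) (hmu : 0 < mu) (h : 0 ≤ a + c) :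
    IntegrableOn (fun x => (x + c) * (mu * exp (-(mu*x)))) (Ioi a) := by
  exact integrableOn_Ioi_deriv_of_nonneg' (fun x _ => hasDerivAt_A mu c x hmu.ne')
    (fun x hx => mul_nonneg (by nlinarith [hx.out]) (by positivity))
    (tendsto_A mu c hmu)

lemma integral_Ioi_exp' (mu a : ℝ) (hmu : 0 < mu) :
    ∫ x in Ioi a, mu * exp (-(mu*x)) = exp (-(mu*a)) := by
  have := integral_Ioi_of_hasDerivAt_of_nonneg' (a := a)
    (g := fun t => -exp (-(mu*t))) (g' := fun x => mu * exp (-(mu*x)))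
    (fun x _ => hasDerivAt_B mu x) (fun x _ => by positivity)
    ((tendsto_exp' mu hmu).neg.congr (fun t => rfl) |>.mono_left le_rfl |>.congr' (by rfl))
  simpa using this

lemma integrableOn_Ioi_exp' (mu a : ℝ) (hmu : 0 < mu) :
    IntegrableOn (fun x => mu * exp (-(mu*x))) (Ioi a) := by
  exact integrableOn_Ioi_deriv_of_nonneg' (fun x _ => hasDerivAt_B mu x)
    (fun x _ => by positivity)
    (by simpa using (tendsto_exp' mu hmu).neg)


lemma expPDFReal_eq (mu x : ℝ) :
    exponentialPDFReal mu x = if 0 ≤ x then mu * exp (-(mu*x)) else 0 := by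
  rw [exponentialPDFReal, gammaPDFReal]
  simp only [rpow_one, Real.Gamma_one, div_one, sub_self, rpow_zero, mul_one]

lemma integral_expMeasure (mu : ℝ) (hmu : 0 < mu) (g : ℝ → ℝ) :
    ∫ x, g x ∂(expMeasure mu) = ∫ x in Ioi 0, g x * (mu * exp (-(mu*x))) := by
  have hd : expMeasure mu
      = volume.withDensity (fun x => ((exponentialPDFReal mu x).toNNReal : ℝ≥0∞)) := by
    rfl
  rw [hd, integral_withDensity_eq_integral_smul
    ((measurable_exponentialPDFReal mu).real_toNNReal) g]
  have h0 : ∀ x, x ∉ Ici (0:ℝ) → (exponentialPDFReal mu x).toNNReal • g x = 0 := by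
    intro x hx
    have : exponentialPDFReal mu x = 0 := by
      rw [expPDFReal_eq]; rw [mem_Ici, not_le] at hx; simp [not_le.2 hx]
    simp [this]
  rw [← setIntegral_eq_integral_of_forall_compl_eq_zero h0, integral_Ici_eq_integral_Ioi]
  refine setIntegral_congr_fun measurableSet_Ioi (fun x hx => ?_)
  have hx0 : (0:ℝ) ≤ x := le_of_lt hx
  rw [NNReal.smul_def, Real.coe_toNNReal _ (exponentialPDFReal_nonneg hmu x),
    expPDFReal_eq, if_pos hx0, smul_eq_mul, mul_comm]

lemma integrable_abs_expMeasure (mu : ℝ) (hmu : 0 < mu) :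
    Integrable (fun x => |x|) (expMeasure mu) := by
  have hd : expMeasure mu = volume.withDensity (exponentialPDF mu) := rfl
  have hpdf : exponentialPDF mu = fun x => ENNReal.ofReal (exponentialPDFReal mu x) := rfl
  rw [hd, hpdf, integrable_withDensity_iff (measurable_exponentialPDFReal mu).ennreal_ofReal
    (Eventually.of_forall (fun x => ENNReal.ofReal_lt_top))]
  simp only [ENNReal.toReal_ofReal (exponentialPDFReal_nonneg hmu _)]
  have heq : ∀ x : ℝ, |x| * exponentialPDFReal mu x
      = if 0 ≤ x then (x + 0) * (mu * exp (-(mu*x))) else 0 := by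
    intro x
    rw [expPDFReal_eq]
    by_cases h : 0 ≤ x
    · simp [h, abs_of_nonneg h]
    · simp [h]
  rw [← integrableOn_univ, ← Iio_union_Ici (a := (0:ℝ))]
  apply IntegrableOn.union
  · apply (integrable_zero _ _ _).integrableOn.congr_fun _ measurableSet_Iio
    intro x hx
    simp only [heq, if_neg (not_le.2 (mem_Iio.mp hx)), Pi.zero_apply]
  · rw [IntegrableOn, Measure.restrict_congr_set Ioi_ae_eq_Ici.symm]
    have h2 : IntegrableOn (fun x => (x + 0) * (mu * exp (-(mu*x)))) (Ioi 0) :=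
      integrableOn_Ioi_linexp mu 0 0 hmu (by norm_num)
    apply h2.congr_fun _ measurableSet_Ioi
    intro x hx
    simp only [heq, if_pos (le_of_lt (mem_Ioi.mp hx))]

lemma split_Ioi {f : ℝ → ℝ} {a b : ℝ} (hab : a ≤ b) (h1 : IntegrableOn f (Ioc a b))
    (h2 : IntegrableOn f (Ioi b)) :
    ∫ x in Ioi a, f x = (∫ x in Ioc a b, f x) + ∫ x in Ioi b, f x := by
  rw [← Ioc_union_Ioi_eq_Ioi hab,
    setIntegral_union (Ioc_disjoint_Ioi le_rfl) measurableSet_Ioi h1 h2]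

lemma cont_min (s c : ℝ) (mu : ℝ) :
    Continuous (fun x' : ℝ => min (max (x' + c) 0) s * (mu * exp (-(mu*x')))) := by
  fun_prop

lemma inner_le (mu d s : ℝ) (hmu : 0 < mu) (hs : 0 ≤ s) (hsd : s ≤ d) :
    ∫ x', min (max (x' + s - d) 0) s ∂(expMeasure mu)
      = (exp (-(mu*(d-s))) - exp (-(mu*d)))/mu := by
  have hd0 : 0 ≤ d := le_trans hs hsd
  rw [integral_expMeasure mu hmu]
  set f : ℝ → ℝ := fun x' => min (max (x' + s - d) 0) s * (mu * exp (-(mu*x'))) with hf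
  have hcont : Continuous f := by
    have := cont_min s (s - d) mu
    simpa [hf, add_sub_assoc] using this
  have htail : EqOn (fun x' => s * (mu * exp (-(mu*x')))) f (Ioi d) := by
    intro x' hx'
    have h1 : max (x' + s - d) 0 = x' + s - d := max_eq_left (by simp at hx'; linarith)
    have h2 : min (x' + s - d) s = s := min_eq_right (by simp at hx'; linarith)
    simp only [hf, h1, h2]
  have htailInt : IntegrableOn f (Ioi d) :=
    IntegrableOn.congr_fun ((integrableOn_Ioi_exp' mu d hmu).const_mul s) htail measurableSet_Ioi
  rw [split_Ioi hd0 (hcont.integrableOn_Ioc) htailInt]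
  have hIoc : (∫ x' in Ioc 0 d, f x') = ∫ x' in (0:ℝ)..d, f x' :=
    (intervalIntegral.integral_of_le hd0).symm
  rw [hIoc]
  have hadj : (∫ x' in (0:ℝ)..d, f x')
      = (∫ x' in (0:ℝ)..(d-s), f x') + ∫ x' in (d-s)..d, f x' :=
    (intervalIntegral.integral_add_adjacent_intervals
      (hcont.intervalIntegrable _ _) (hcont.intervalIntegrable _ _)).symm
  rw [hadj]
  have hp1 : (∫ x' in (0:ℝ)..(d-s), f x') = 0 := by
    rw [intervalIntegral.integral_congr (g := fun _ => (0:ℝ))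
      (fun x' hx' => ?_)]
    · simp
    · rw [uIcc_of_le (by linarith)] at hx'
      have h1 : max (x' + s - d) 0 = 0 := max_eq_right (by cases hx'; linarith)
      simp only [hf, h1, min_eq_left hs, zero_mul]
  have hp2 : (∫ x' in (d-s)..d, f x')
      = -(d + (s-d) + 1/mu) * exp (-(mu*d)) - (-(d - s + (s-d) + 1/mu) * exp (-(mu*(d-s)))) := by
    rw [intervalIntegral.integral_congr
      (g := fun x' => (x' + (s-d)) * (mu * exp (-(mu*x')))) (fun x' hx' => ?_)]
    · exact intervalIntegral.integral_eq_sub_of_hasDerivAt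
        (fun x _ => hasDerivAt_A mu (s-d) x hmu.ne')
        (by apply Continuous.intervalIntegrable; fun_prop)
    · rw [uIcc_of_le (by linarith)] at hx'
      obtain ⟨h1, h2⟩ := hx'
      have ha : max (x' + s - d) 0 = x' + s - d := max_eq_left (by linarith)
      have hb : min (x' + s - d) s = x' + s - d := min_eq_left (by linarith)
      simp only [hf, ha, hb]
      ring_nf
  have hp3 : (∫ x' in Ioi d, f x') = s * exp (-(mu*d)) := by
    rw [setIntegral_congr_fun measurableSet_Ioi htail.symm]
    rw [MeasureTheory.integral_const_mul, integral_Ioi_exp' mu d hmu]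
  rw [hp1, hp2, hp3]
  field_simp
  ring

lemma inner_ge (mu d s : ℝ) (hmu : 0 < mu) (hd0 : 0 ≤ d) (hds : d ≤ s) :
    ∫ x', min (max (x' + s - d) 0) s ∂(expMeasure mu)
      = s - d + (1 - exp (-(mu*d)))/mu := by
  rw [integral_expMeasure mu hmu]
  set f : ℝ → ℝ := fun x' => min (max (x' + s - d) 0) s * (mu * exp (-(mu*x'))) with hf
  have hs : 0 ≤ s := le_trans hd0 hds
  have hcont : Continuous f := by
    have := cont_min s (s - d) mu
    simpa [hf, add_sub_assoc] using this
  have htail : EqOn (fun x' => s * (mu * exp (-(mu*x')))) f (Ioi d) := by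
    intro x' hx'
    have h1 : max (x' + s - d) 0 = x' + s - d := max_eq_left (by simp at hx'; linarith)
    have h2 : min (x' + s - d) s = s := min_eq_right (by simp at hx'; linarith)
    simp only [hf, h1, h2]
  have htailInt : IntegrableOn f (Ioi d) :=
    IntegrableOn.congr_fun ((integrableOn_Ioi_exp' mu d hmu).const_mul s) htail measurableSet_Ioi
  rw [split_Ioi hd0 (hcont.integrableOn_Ioc) htailInt]
  have hp1 : (∫ x' in Ioc 0 d, f x')
      = -(d + (s-d) + 1/mu) * exp (-(mu*d)) - (-((0:ℝ) + (s-d) + 1/mu) * exp (-(mu*0))) := by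
    rw [← intervalIntegral.integral_of_le hd0]
    rw [intervalIntegral.integral_congr
      (g := fun x' => (x' + (s-d)) * (mu * exp (-(mu*x')))) (fun x' hx' => ?_)]
    · exact intervalIntegral.integral_eq_sub_of_hasDerivAt
        (fun x _ => hasDerivAt_A mu (s-d) x hmu.ne')
        (by apply Continuous.intervalIntegrable; fun_prop)
    · rw [uIcc_of_le hd0] at hx'
      obtain ⟨h1, h2⟩ := hx'
      have ha : max (x' + s - d) 0 = x' + s - d := max_eq_left (by linarith)
      have hb : min (x' + s - d) s = x' + s - d := min_eq_left (by linarith)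
      simp only [hf, ha, hb]
      ring_nf
  have hp3 : (∫ x' in Ioi d, f x') = s * exp (-(mu*d)) := by
    rw [setIntegral_congr_fun measurableSet_Ioi htail.symm]
    rw [MeasureTheory.integral_const_mul, integral_Ioi_exp' mu d hmu]
  rw [hp1, hp3]
  rw [mul_zero, neg_zero, Real.exp_zero]
  field_simp
  ring


lemma hasDerivAt_C (mu k1 k2 i : ℝ) (hmu : mu ≠ 0) :
    HasDerivAt (fun t => k1 * t + k2 * exp (-(mu*t))/mu)
      (k1 - k2 * exp (-(mu*i))) i := by
  have h2 : HasDerivAt (fun t : ℝ => exp (-(mu*t))) (exp (-(mu*i)) * (-mu)) i :=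
    (((hasDerivAt_id i).const_mul mu).neg.exp).congr_deriv (by simp)
  have := ((hasDerivAt_id i).const_mul k1).add (((h2.const_mul k2)).div_const mu)
  refine this.congr_deriv ?_
  field_simp
  ring

lemma K_reshape (mu d x i : ℝ) :
    (∫ x', min (max (x' + i + x - d) 0) (x + i) ∂(expMeasure mu))
      = ∫ x', min (max (x' + (x + i) - d) 0) (x + i) ∂(expMeasure mu) := by
  congr 1; funext x'; ring_nf

lemma mid_le (mu d x : ℝ) (hmu : 0 < mu) (hx0 : 0 ≤ x) (hxd : x ≤ d) :
    ∫ i, (∫ x', min (max (x' + i + x - d) 0) (x + i) ∂(expMeasure mu)) ∂(expMeasure mu)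
      = (d-x)*exp (-(mu*(d-x))) + 2*exp (-(mu*(d-x)))/mu - exp (-(mu*d))/mu := by
  have hE1 : exp (-(mu*d)) ≤ 1 := exp_le_one_iff.mpr (by nlinarith)
  set K : ℝ → ℝ := fun i => ∫ x', min (max (x' + i + x - d) 0) (x + i) ∂(expMeasure mu) with hK
  have hK_le : ∀ i, 0 ≤ i → x + i ≤ d →
      K i = (exp (-(mu*(d-(x+i)))) - exp (-(mu*d)))/mu := by
    intro i h1 h2
    rw [hK]
    simp only [K_reshape mu d x i]
    exact inner_le mu d (x+i) hmu (by linarith) h2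
  have hK_ge : ∀ i, 0 ≤ i → d ≤ x + i →
      K i = (x+i) - d + (1 - exp (-(mu*d)))/mu := by
    intro i h1 h2
    rw [hK]
    simp only [K_reshape mu d x i]
    exact inner_ge mu d (x+i) hmu (by linarith) h2
  rw [integral_expMeasure mu hmu]
  set c : ℝ := x - d + (1 - exp (-(mu*d)))/mu with hc
  have hcnn : 0 ≤ (d - x) + c := by
    rw [hc]; have : 0 ≤ (1 - exp (-(mu*d)))/mu := div_nonneg (by linarith) hmu.le
    linarith
  -- explicit formulas on the two pieces
  have heq1 : EqOn (fun i => exp (-(mu*(d-x))) - exp (-(mu*d)) * exp (-(mu*i)))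
      (fun i => K i * (mu * exp (-(mu*i)))) (Icc 0 (d-x)) := by
    intro i hi
    obtain ⟨h1, h2⟩ := hi
    have := hK_le i h1 (by linarith)
    simp only [this]
    have hexp : exp (-(mu*(d-(x+i)))) * exp (-(mu*i)) = exp (-(mu*(d-x))) := by
      rw [← exp_add]; ring_nf
    field_simp
    nlinarith [hexp]
  have heq2 : EqOn (fun i => (i + c) * (mu * exp (-(mu*i))))
      (fun i => K i * (mu * exp (-(mu*i)))) (Ioi (d-x)) := by
    intro i hi
    have h1 : 0 ≤ i := le_trans (by linarith) (le_of_lt hi)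
    have := hK_ge i h1 (by simp at hi; linarith)
    simp only [this]
    rw [hc]; ring
  have hint1 : IntegrableOn (fun i => K i * (mu * exp (-(mu*i)))) (Ioc 0 (d-x)) := by
    refine IntegrableOn.congr_fun ?_ (heq1.mono Ioc_subset_Icc_self) measurableSet_Ioc
    apply Continuous.integrableOn_Ioc; fun_prop
  have hint2 : IntegrableOn (fun i => K i * (mu * exp (-(mu*i)))) (Ioi (d-x)) :=
    IntegrableOn.congr_fun (integrableOn_Ioi_linexp mu (d-x) c hmu hcnn) heq2 measurableSet_Ioi
  rw [split_Ioi (by linarith) hint1 hint2]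
  have hp1 : (∫ i in Ioc 0 (d-x), K i * (mu * exp (-(mu*i))))
      = (exp (-(mu*(d-x))) * (d-x) + exp (-(mu*d)) * exp (-(mu*(d-x)))/mu)
        - (exp (-(mu*(d-x))) * 0 + exp (-(mu*d)) * exp (-(mu*0))/mu) := by
    rw [← intervalIntegral.integral_of_le (by linarith)]
    rw [intervalIntegral.integral_congr (g := fun i => K i * (mu * exp (-(mu*i))))
      (by rw [uIcc_of_le (by linarith)]; exact heq1) |>.symm]
    exact intervalIntegral.integral_eq_sub_of_hasDerivAt
      (fun i _ => hasDerivAt_C mu (exp (-(mu*(d-x)))) (exp (-(mu*d))) i hmu.ne')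
      (by apply Continuous.intervalIntegrable; fun_prop)
  have hp2 : (∫ i in Ioi (d-x), K i * (mu * exp (-(mu*i))))
      = ((d-x) + c + 1/mu) * exp (-(mu*(d-x))) := by
    rw [setIntegral_congr_fun measurableSet_Ioi heq2.symm]
    exact integral_Ioi_linexp mu (d-x) c hmu hcnn
  rw [hp1, hp2, hc]
  simp only [mul_zero, neg_zero, Real.exp_zero]
  field_simp
  ring

lemma mid_ge (mu d x : ℝ) (hmu : 0 < mu) (hd0 : 0 ≤ d) (hdx : d ≤ x) :
    ∫ i, (∫ x', min (max (x' + i + x - d) 0) (x + i) ∂(expMeasure mu)) ∂(expMeasure mu)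
      = x - d + 1/mu + (1 - exp (-(mu*d)))/mu := by
  have hE1 : exp (-(mu*d)) ≤ 1 := exp_le_one_iff.mpr (by nlinarith)
  set K : ℝ → ℝ := fun i => ∫ x', min (max (x' + i + x - d) 0) (x + i) ∂(expMeasure mu) with hK
  rw [integral_expMeasure mu hmu]
  set c : ℝ := x - d + (1 - exp (-(mu*d)))/mu with hc
  have hcnn : 0 ≤ (0:ℝ) + c := by
    rw [hc]; have : 0 ≤ (1 - exp (-(mu*d)))/mu := div_nonneg (by linarith) hmu.le
    linarith
  have heq2 : EqOn (fun i => (i + c) * (mu * exp (-(mu*i))))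
      (fun i => K i * (mu * exp (-(mu*i)))) (Ioi 0) := by
    intro i hi
    have h1 : (0:ℝ) ≤ i := le_of_lt hi
    have h2 : K i = (x+i) - d + (1 - exp (-(mu*d)))/mu := by
      rw [hK]
      simp only [K_reshape mu d x i]
      exact inner_ge mu d (x+i) hmu hd0 (by linarith)
    simp only [h2]
    rw [hc]; ring
  rw [setIntegral_congr_fun measurableSet_Ioi heq2.symm]
  rw [integral_Ioi_linexp mu 0 c hmu hcnn]
  rw [mul_zero, neg_zero, Real.exp_zero, hc]
  ring


lemma hasDerivAt_D (mu E d x : ℝ) (hmu : mu ≠ 0) :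
    HasDerivAt (fun t => mu*E*(d*t - t^2/2) + 2*E*t + E*exp (-(mu*t))/mu)
      (mu*E*(d - x) + 2*E - E*exp (-(mu*x))) x := by
  have h2 : HasDerivAt (fun t : ℝ => exp (-(mu*t))) (exp (-(mu*x)) * (-mu)) x :=
    (((hasDerivAt_id x).const_mul mu).neg.exp).congr_deriv (by simp)
  have h1 : HasDerivAt (fun t : ℝ => d*t - t^2/2) (d - x) x := by
    have := (((hasDerivAt_id x).const_mul d).sub ((hasDerivAt_pow 2 x).div_const 2))
    refine this.congr_deriv ?_
    simp
  have := ((h1.const_mul (mu*E)).add ((hasDerivAt_id x).const_mul (2*E))).add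
    ((h2.const_mul E).div_const mu)
  refine this.congr_deriv ?_
  field_simp
  ring

lemma outer (mu d : ℝ) (hmu : 0 < mu) (hd : 0 ≤ d) :
    ∫ x, (∫ i, (∫ x', min (max (x' + i + x - d) 0) (x + i)
        ∂(expMeasure mu)) ∂(expMeasure mu)) ∂(expMeasure mu)
      = (mu * exp (-(mu * d)) / 2) * (d + 2 / mu) ^ 2 := by
  have hE1 : exp (-(mu*d)) ≤ 1 := exp_le_one_iff.mpr (by nlinarith)
  set H : ℝ → ℝ := fun x => ∫ i, (∫ x', min (max (x' + i + x - d) 0) (x + i)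
      ∂(expMeasure mu)) ∂(expMeasure mu) with hH
  rw [integral_expMeasure mu hmu]
  set E : ℝ := exp (-(mu*d)) with hE
  set c2 : ℝ := -d + 1/mu + (1 - E)/mu with hc2
  have hcnn : 0 ≤ d + c2 := by
    rw [hc2]
    have h1 : 0 ≤ (1 - E)/mu := div_nonneg (by linarith) hmu.le
    have h2 : 0 < 1/mu := by positivity
    linarith
  have heq1 : EqOn (fun x => mu*E*(d - x) + 2*E - E*exp (-(mu*x)))
      (fun x => H x * (mu * exp (-(mu*x)))) (Icc 0 d) := by
    intro x hx
    obtain ⟨h1, h2⟩ := hx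
    have hmid := mid_le mu d x hmu h1 h2
    have hexp : exp (-(mu*(d-x))) * exp (-(mu*x)) = exp (-(mu*d)) := by
      rw [← exp_add]; ring_nf
    simp only [hH]
    rw [hmid, hE, ← hexp]
    field_simp
  have heq2 : EqOn (fun x => (x + c2) * (mu * exp (-(mu*x))))
      (fun x => H x * (mu * exp (-(mu*x)))) (Ioi d) := by
    intro x hx
    have := mid_ge mu d x hmu hd (le_of_lt hx)
    simp only [hH, this]
    rw [hc2]; ring
  have hint1 : IntegrableOn (fun x => H x * (mu * exp (-(mu*x)))) (Ioc 0 d) := by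
    refine IntegrableOn.congr_fun ?_ (heq1.mono Ioc_subset_Icc_self) measurableSet_Ioc
    apply Continuous.integrableOn_Ioc; fun_prop
  have hint2 : IntegrableOn (fun x => H x * (mu * exp (-(mu*x)))) (Ioi d) :=
    IntegrableOn.congr_fun (integrableOn_Ioi_linexp mu d c2 hmu hcnn) heq2 measurableSet_Ioi
  rw [split_Ioi hd hint1 hint2]
  have hp1 : (∫ x in Ioc 0 d, H x * (mu * exp (-(mu*x))))
      = (mu*E*(d*d - d^2/2) + 2*E*d + E*exp (-(mu*d))/mu)
        - (mu*E*(d*0 - 0^2/2) + 2*E*0 + E*exp (-(mu*0))/mu) := by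
    rw [← intervalIntegral.integral_of_le hd]
    rw [intervalIntegral.integral_congr (g := fun x => H x * (mu * exp (-(mu*x))))
      (by rw [uIcc_of_le hd]; exact heq1) |>.symm]
    exact intervalIntegral.integral_eq_sub_of_hasDerivAt
      (fun x _ => hasDerivAt_D mu E d x hmu.ne')
      (by apply Continuous.intervalIntegrable; fun_prop)
  have hp2 : (∫ x in Ioi d, H x * (mu * exp (-(mu*x))))
      = (d + c2 + 1/mu) * exp (-(mu*d)) := by
    rw [setIntegral_congr_fun measurableSet_Ioi heq2.symm]
    exact integral_Ioi_linexp mu d c2 hmu hcnn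
  rw [hp1, hp2, hc2, hE]
  simp only [mul_zero, neg_zero, Real.exp_zero]
  field_simp
  ring

end Cor3Aux

open Cor3Aux

/-- Corollary 3 (M/M/1/1, case `λ = μ`): with `X, X', I ~ Exp(μ)` mutually independent,
`E[min ((X' + I + X - d)⁺, X + I)] = (μ e^{-μd}/2)(d + 2/μ)²`. -/
theorem stmt11 {Ω : Type*} [MeasurableSpace Ω] (P : Measure Ω) [IsProbabilityMeasure P]
    (mu d : ℝ) (hmu : 0 < mu) (hd : 0 ≤ d)
    (X X' I : Ω → ℝ) (hX : Measurable X) (hX' : Measurable X') (hI : Measurable I)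
    (hindep : iIndepFun (m := fun _ : Fin 3 => (inferInstance : MeasurableSpace ℝ)) ![X, X', I] P)
    (hXd : P.map X = expMeasure mu) (hX'd : P.map X' = expMeasure mu)
    (hId : P.map I = expMeasure mu) :
    (∫ ω, min (max (X' ω + I ω + X ω - d) 0) (X ω + I ω) ∂P) =
      (mu * exp (-(mu * d)) / 2) * (d + 2 / mu) ^ 2 := by
  haveI hPM : IsProbabilityMeasure (expMeasure mu) := isProbabilityMeasure_expMeasure hmu
  have hmeas : ∀ k : Fin 3, Measurable (![X, X', I] k) := by
    intro k
    fin_cases k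
    · simpa using hX
    · simpa using hX'
    · simpa using hI
  have hXI : IndepFun X I P := by
    have := hindep.indepFun (i := 0) (j := 2) (by decide)
    simpa using this
  have hpair : P.map (fun ω => (X ω, I ω)) = (expMeasure mu).prod (expMeasure mu) := by
    have h := (indepFun_iff_map_prod_eq_prod_map_map hX.aemeasurable hI.aemeasurable).mp hXI
    rw [h, hXd, hId]
  have hPI : IndepFun (fun ω => (X ω, I ω)) X' P := by
    have := hindep.indepFun_prodMk hmeas 0 2 1 (by decide) (by decide)
    simpa using this
  have hT : P.map (fun ω => ((X ω, I ω), X' ω))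
      = ((expMeasure mu).prod (expMeasure mu)).prod (expMeasure mu) := by
    have h := (indepFun_iff_map_prod_eq_prod_map_map
      (hX.prodMk hI).aemeasurable hX'.aemeasurable).mp hPI
    rw [h, hpair, hX'd]
  set F : (ℝ × ℝ) × ℝ → ℝ :=
    fun p => min (max (p.2 + p.1.2 + p.1.1 - d) 0) (p.1.1 + p.1.2) with hF
  have hFc : Continuous F := by
    apply Continuous.min
    · fun_prop
    · fun_prop
  have hTm : Measurable (fun ω => ((X ω, I ω), X' ω)) := (hX.prodMk hI).prodMk hX'
  have h1 : (∫ ω, min (max (X' ω + I ω + X ω - d) 0) (X ω + I ω) ∂P)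
      = ∫ z, F z ∂(((expMeasure mu).prod (expMeasure mu)).prod (expMeasure mu)) := by
    rw [← hT, integral_map hTm.aemeasurable hFc.aestronglyMeasurable]
  -- integrability of F
  have hmap1 : Measure.map (Prod.fst ∘ Prod.fst : (ℝ×ℝ)×ℝ → ℝ) (((expMeasure mu).prod (expMeasure mu)).prod (expMeasure mu)) = (expMeasure mu) := by
    rw [← Measure.map_map measurable_fst measurable_fst]
    simp [Measure.map_fst_prod]
  have hmap2 : Measure.map (Prod.snd ∘ Prod.fst : (ℝ×ℝ)×ℝ → ℝ) (((expMeasure mu).prod (expMeasure mu)).prod (expMeasure mu)) = (expMeasure mu) := by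
    rw [← Measure.map_map measurable_snd measurable_fst]
    simp [Measure.map_fst_prod, Measure.map_snd_prod]
  have habs := integrable_abs_expMeasure mu hmu
  have hb1 : Integrable (fun z : (ℝ×ℝ)×ℝ => |z.1.1|) (((expMeasure mu).prod (expMeasure mu)).prod (expMeasure mu)) := by
    have hiff := integrable_map_measure
      (μ := ((expMeasure mu).prod (expMeasure mu)).prod (expMeasure mu))
      (f := (Prod.fst ∘ Prod.fst : (ℝ×ℝ)×ℝ → ℝ)) (g := fun t : ℝ => |t|)
      (by rw [hmap1]; exact habs.aestronglyMeasurable)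
      (measurable_fst.comp measurable_fst).aemeasurable
    have := hiff.mp (by rw [hmap1]; exact habs)
    exact this
  have hb2 : Integrable (fun z : (ℝ×ℝ)×ℝ => |z.1.2|) (((expMeasure mu).prod (expMeasure mu)).prod (expMeasure mu)) := by
    have hiff := integrable_map_measure
      (μ := ((expMeasure mu).prod (expMeasure mu)).prod (expMeasure mu))
      (f := (Prod.snd ∘ Prod.fst : (ℝ×ℝ)×ℝ → ℝ)) (g := fun t : ℝ => |t|)
      (by rw [hmap2]; exact habs.aestronglyMeasurable)
      (measurable_snd.comp measurable_fst).aemeasurable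
    have := hiff.mp (by rw [hmap2]; exact habs)
    exact this
  have hFint : Integrable F (((expMeasure mu).prod (expMeasure mu)).prod (expMeasure mu)) := by
    refine (hb1.add hb2).mono' hFc.aestronglyMeasurable (Eventually.of_forall (fun z => ?_))
    simp only [Pi.add_apply]
    have hs : |min (max (z.2 + z.1.2 + z.1.1 - d) 0) (z.1.1 + z.1.2)| ≤ |z.1.1 + z.1.2| := by
      rcases le_total (max (z.2 + z.1.2 + z.1.1 - d) 0) (z.1.1 + z.1.2) with h | h
      · rw [min_eq_left h]
        rw [abs_of_nonneg (le_max_right _ _)]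
        exact le_trans h (le_abs_self _)
      · rw [min_eq_right h]
    calc ‖F z‖ = |min (max (z.2 + z.1.2 + z.1.1 - d) 0) (z.1.1 + z.1.2)| := rfl
      _ ≤ |z.1.1 + z.1.2| := hs
      _ ≤ |z.1.1| + |z.1.2| := abs_add_le _ _
  rw [h1, integral_prod F hFint]
  rw [integral_prod _ hFint.integral_prod_left]
  have h3 : (∫ x, ∫ i, ∫ x', F ((x, i), x') ∂(expMeasure mu) ∂(expMeasure mu) ∂(expMeasure mu))
      = ∫ x, (∫ i, (∫ x', min (max (x' + i + x - d) 0) (x + i) ∂(expMeasure mu)) ∂(expMeasure mu)) ∂(expMeasure mu) := rfl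
  rw [h3]
  exact outer mu d hmu hd
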